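/- Let ℓ₁,…,ℓₙ be reals with n ≥ 2, mean ℓ̄ = L/n and unbiased sample variance V. As ℓ → 0, the sample variance of the appended sample (ℓ₁,…,ℓₙ,ℓ) converges to ((n−1)/n)·V + (1/(n+1))·(L/n)², which differs from V in general (non-continuity of TSI under insertion of short bars). -/

import Mathlib

open Finset Filter Topology

theorem tsi_discontinuous_under_short_bar_insertion (n : ℕ) (hn : 2 ≤ n) (ℓ : Fin n → ℝ) :
    Tendsto
      (fun x : ℝ =>
        (1 / ((n : ℝ) + 1 - 1)) *
          ∑ i : Fin (n + 1),
            ((Fin.snoc ℓ x : Fin (n + 1) → ℝ) i -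
              (∑ j : Fin (n + 1), (Fin.snoc ℓ x : Fin (n + 1) → ℝ) j) / ((n : ℝ) + 1)) ^ 2)
      (𝓝 0)
      (𝓝 ((((n : ℝ) - 1) / n) *
            ((1 / ((n : ℝ) - 1)) * ∑ i, (ℓ i - (∑ j, ℓ j) / n) ^ 2) +
          (1 / ((n : ℝ) + 1)) * ((∑ j, ℓ j) / n) ^ 2)) := by
  have hcont : Continuous (fun x : ℝ =>
        (1 / ((n : ℝ) + 1 - 1)) *
          ∑ i : Fin (n + 1),
            ((Fin.snoc ℓ x : Fin (n + 1) → ℝ) i -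
              (∑ j : Fin (n + 1), (Fin.snoc ℓ x : Fin (n + 1) → ℝ) j) / ((n : ℝ) + 1)) ^ 2) := by
    apply Continuous.mul continuous_const
    apply continuous_finset_sum
    intro i _
    apply Continuous.pow
    apply Continuous.sub
    · exact Fin.lastCases (by simpa using continuous_id') (fun j => by simpa using continuous_const) i
    · apply Continuous.div_const
      apply continuous_finset_sum
      intro j _
      exact Fin.lastCases (by simpa using continuous_id') (fun k => by simpa using continuous_const) j
  have h := hcont.tendsto 0
  convert h using 2
  have hsnocsum : (∑ j : Fin (n+1), (Fin.snoc ℓ (0:ℝ) : Fin (n + 1) → ℝ) j) = ∑ j, ℓ j := by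
    rw [Fin.sum_univ_castSucc]
    simp
  have hsplit : ∀ c : ℝ, (∑ i : Fin (n+1),
      ((Fin.snoc ℓ (0:ℝ) : Fin (n + 1) → ℝ) i - c) ^ 2)
      = (∑ i, (ℓ i - c)^2) + c^2 := by
    intro c
    rw [Fin.sum_univ_castSucc]
    simp [sub_sq]
  have expand : ∀ c : ℝ, ∑ i, (ℓ i - c)^2
      = (∑ i, (ℓ i)^2) - 2*c*(∑ i, ℓ i) + n*c^2 := by
    intro c
    have : ∀ i ∈ univ, (ℓ i - c)^2 = (ℓ i)^2 - 2*c*(ℓ i) + c^2 := fun i _ => by ring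
    rw [Finset.sum_congr rfl this, Finset.sum_add_distrib, Finset.sum_sub_distrib,
      ← Finset.mul_sum, Finset.sum_const]
    simp [mul_comm]
  set S := ∑ j, ℓ j
  set Q := ∑ i, (ℓ i)^2
  rw [hsnocsum, hsplit, expand, expand]
  have hn2 : (2:ℝ) ≤ (n:ℝ) := by exact_mod_cast hn
  have h0 : (n:ℝ) ≠ 0 := by linarith
  have h1 : (n:ℝ) - 1 ≠ 0 := by linarith
  have h2 : (n:ℝ) + 1 ≠ 0 := by linarith
  field_simp
  have hinv : (n:ℝ) * (n:ℝ)⁻¹ = 1 := mul_inv_cancel₀ h0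
  linear_combination (-((n:ℝ) * Q - n * S ^ 2 + n ^ 2 * Q * 2 - n ^ 2 * S ^ 2 + n ^ 3 * Q)) * hinv
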